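/- Let S be a nontrivial commutative entire antinegative semiring and let supp : M_n(S) → M_n(𝓑) be the entrywise support map, supp(A)_{i,j} = 0 if A_{i,j} = 0 and supp(A)_{i,j} = 1 otherwise, where 𝓑 is the binary Boolean semiring. If A, B ∈ M_n(S) satisfy AB = BA, then supp(A)·supp(B) = supp(B)·supp(A) in M_n(𝓑). -/

import Mathlib

open Classical in
/-- The entrywise support of a matrix: `supp(A)_{i,j} = 0` if `A_{i,j} = 0` and `1` otherwise. -/
noncomputable def matrixSupp {S : Type*} [Zero S] (B : Type*) [Zero B] [One B] {n : ℕ}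
    (A : Matrix (Fin n) (Fin n) S) : Matrix (Fin n) (Fin n) B :=
  Matrix.of fun i j => if A i j = 0 then 0 else 1

/-- In a zero-sum-free semiring, a finite sum is zero iff every term is zero. -/
lemma sum_eq_zero_iff_aux {S : Type*} [AddCommMonoid S]
    (hanti : ∀ a b : S, a + b = 0 → a = 0 ∧ b = 0)
    {ι : Type*} (s : Finset ι) (f : ι → S) :
    s.sum f = 0 ↔ ∀ k ∈ s, f k = 0 := by
  classical
  induction s using Finset.induction_on with
  | empty => simp
  | insert a s hk ih =>
    rw [Finset.sum_insert hk]
    constructor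
    · intro h
      obtain ⟨h1, h2⟩ := hanti _ _ h
      intro k hkmem
      rcases Finset.mem_insert.mp hkmem with rfl | hks
      · exact h1
      · exact (ih.mp h2) k hks
    · intro h
      rw [h a (Finset.mem_insert_self a s), zero_add]
      exact ih.mpr fun k hks => h k (Finset.mem_insert_of_mem hks)

/-- Sum of 0/1 elements in a Boolean-like semiring: 1 if any term is 1, else 0. -/
lemma sum_bool_aux {B : Type*} [CommSemiring B] (h11 : (1 : B) + 1 = 1)
    {ι : Type*} (s : Finset ι) (f : ι → B) (hf : ∀ k ∈ s, f k = 0 ∨ f k = 1)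
    (hne : ¬ ∀ k ∈ s, f k = 0) : s.sum f = 1 := by
  classical
  induction s using Finset.induction_on with
  | empty => simp at hne
  | insert a s hk ih =>
    rw [Finset.sum_insert hk]
    rcases hf a (Finset.mem_insert_self a s) with h0 | h1
    · rw [h0, zero_add]
      apply ih (fun k hks => hf k (Finset.mem_insert_of_mem hks))
      intro hall
      exact hne fun k hkmem => by
        rcases Finset.mem_insert.mp hkmem with rfl | hks
        · exact h0
        · exact hall k hks
    · rw [h1]
      by_cases hall : ∀ k ∈ s, f k = 0
      · rw [Finset.sum_eq_zero hall, add_zero]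
      · rw [ih (fun k hks => hf k (Finset.mem_insert_of_mem hks)) hall, h11]

/-- If `S` is a nontrivial commutative entire antinegative semiring and `A, B ∈ M_n(S)`
commute, then their supports commute in `M_n(𝓑)` over the binary Boolean semiring `𝓑`. -/
theorem supp_commute (S : Type*) [CommSemiring S] [Nontrivial S]
    (hentire : ∀ a b : S, a * b = 0 → a = 0 ∨ b = 0)
    (hanti : ∀ a b : S, a + b = 0 → a = 0 ∧ b = 0)
    (B : Type*) [CommSemiring B] (h01 : (0 : B) ≠ 1)
    (hmem : ∀ x : B, x = 0 ∨ x = 1) (h11 : (1 : B) + 1 = 1)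
    (n : ℕ) (A A' : Matrix (Fin n) (Fin n) S) (hcomm : A * A' = A' * A) :
    matrixSupp B A * matrixSupp B A' = matrixSupp B A' * matrixSupp B A := by
  classical
  -- key: (supp X * supp Y) i j = if (X*Y) i j = 0 then 0 else 1
  have key : ∀ (X Y : Matrix (Fin n) (Fin n) S) (i j : Fin n),
      (matrixSupp B X * matrixSupp B Y) i j
        = if (X * Y) i j = 0 then (0 : B) else 1 := by
    intro X Y i j
    have hterm : ∀ k, (matrixSupp B X) i k * (matrixSupp B Y) k j
        = if X i k * Y k j = 0 then (0 : B) else 1 := by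
      intro k
      simp only [matrixSupp, Matrix.of_apply]
      by_cases hx : X i k = 0
      · simp [hx]
      · by_cases hy : Y k j = 0
        · simp [hx, hy]
        · have hxy : X i k * Y k j ≠ 0 := fun h => by
            rcases hentire _ _ h with h | h
            · exact hx h
            · exact hy h
          simp [hx, hy, hxy]
    rw [Matrix.mul_apply, Matrix.mul_apply]
    simp_rw [hterm]
    by_cases hz : ∀ k ∈ Finset.univ, X i k * Y k j = 0
    · have : (∑ k, X i k * Y k j) = 0 :=
        (sum_eq_zero_iff_aux hanti _ _).mpr hz
      rw [if_pos this, Finset.sum_eq_zero]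
      intro k hk
      rw [if_pos (hz k hk)]
    · have hsum : (∑ k, X i k * Y k j) ≠ 0 := fun h =>
        hz ((sum_eq_zero_iff_aux hanti _ _).mp h)
      rw [if_neg hsum]
      apply sum_bool_aux h11
      · intro k _
        by_cases h : X i k * Y k j = 0 <;> simp [h]
      · intro hall
        apply hz
        intro k hk
        have := hall k hk
        by_cases h : X i k * Y k j = 0
        · exact h
        · rw [if_neg h] at this; exact absurd this.symm h01
  ext i j
  rw [key, key, hcomm]
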